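/- The function ψ is strictly concave–convex on (0,∞) with a unique inflection point: there exists a unique b̂ ∈ (0,∞) such that ψ''(b̂) = 0; moreover ψ''(x) < 0 for all x ∈ (0,b̂), ψ''(x) > 0 for all x ∈ (b̂,∞), and at the inflection point q·ψ(b̂) = μ·ψ'(b̂). -/

import Mathlib

/-- ψ is strictly concave–convex on (0,∞), with a unique inflection
point b̂ ∈ (0,∞): ψ''(b̂) = 0, ψ'' < 0 on (0,b̂), ψ'' > 0 on (b̂,∞), and
q·ψ(b̂) = μ·ψ'(b̂). -/
theorem stmt_2 (μ σ q : ℝ) (hμ : 0 < μ) (hσ : 0 < σ) (hq : 0 < q)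
    (Δ : ℝ) (hΔ : Δ = Real.sqrt (μ ^ 2 + 2 * q * σ ^ 2))
    (ψ : ℝ → ℝ)
    (hψ : ∀ x : ℝ, ψ x =
      σ ^ 2 / Δ * Real.exp (-(μ / σ ^ 2) * x) * Real.sinh (Δ * x / σ ^ 2)) :
    ∃ bhat : ℝ, 0 < bhat ∧ deriv (deriv ψ) bhat = 0 ∧
      (∀ x : ℝ, 0 < x → x < bhat → deriv (deriv ψ) x < 0) ∧
      (∀ x : ℝ, bhat < x → 0 < deriv (deriv ψ) x) ∧
      q * ψ bhat = μ * deriv ψ bhat ∧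
      ∀ b : ℝ, 0 < b → deriv (deriv ψ) b = 0 → b = bhat := by
  have hσ2 : (0:ℝ) < σ ^ 2 := by positivity
  have hΔμ : μ < Δ := by
    have h1 : μ ^ 2 < μ ^ 2 + 2 * q * σ ^ 2 := by nlinarith
    have h2 := Real.sqrt_lt_sqrt (by positivity) h1
    rwa [Real.sqrt_sq hμ.le, ← hΔ] at h2
  have hΔ0 : 0 < Δ := hμ.trans hΔμ
  have hΔne : Δ ≠ 0 := hΔ0.ne'
  have hΔsq : Δ ^ 2 = μ ^ 2 + 2 * q * σ ^ 2 := by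
    rw [hΔ, Real.sq_sqrt (by positivity)]
  obtain ⟨r, hr_def⟩ : ∃ r : ℝ, r = (Δ - μ) / σ ^ 2 := ⟨_, rfl⟩
  obtain ⟨s, hs_def⟩ : ∃ s : ℝ, s = (Δ + μ) / σ ^ 2 := ⟨_, rfl⟩
  obtain ⟨c, hc_def⟩ : ∃ c : ℝ, c = σ ^ 2 / (2 * Δ) := ⟨_, rfl⟩
  have hr : 0 < r := hr_def ▸ div_pos (by linarith) hσ2
  have hs : 0 < s := hs_def ▸ div_pos (by linarith) hσ2
  have hc : 0 < c := by rw [hc_def]; positivity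
  have hrs : r < s := by
    rw [hr_def, hs_def]
    exact div_lt_div_of_pos_right (by linarith) hσ2
  -- rewrite ψ as sum of exponentials
  have hψf : ψ = fun x => c * (Real.exp (r * x) - Real.exp (-(s * x))) := by
    funext x
    rw [hψ x, Real.sinh_eq]
    rw [show r * x = -(μ / σ ^ 2) * x + Δ * x / σ ^ 2 by rw [hr_def]; field_simp; ring,
        show -(s * x) = -(μ / σ ^ 2) * x + -(Δ * x / σ ^ 2) by rw [hs_def]; field_simp; ring,
        Real.exp_add, Real.exp_add]
    rw [hc_def]
    field_simp
  -- first derivative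
  have hd1 : ∀ x : ℝ, HasDerivAt ψ (c * (r * Real.exp (r * x) + s * Real.exp (-(s * x)))) x := by
    intro x
    rw [hψf]
    have h1 : HasDerivAt (fun x : ℝ => Real.exp (r * x)) (Real.exp (r * x) * (r * 1)) x :=
      ((hasDerivAt_id x).const_mul r).exp
    have h2 : HasDerivAt (fun x : ℝ => Real.exp (-(s * x))) (Real.exp (-(s * x)) * (-(s * 1))) x :=
      (((hasDerivAt_id x).const_mul s).neg).exp
    have h3 := (h1.sub h2).const_mul c
    exact h3.congr_deriv (by ring)
  have hderiv1 : deriv ψ = fun x => c * (r * Real.exp (r * x) + s * Real.exp (-(s * x))) :=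
    funext fun x => (hd1 x).deriv
  -- second derivative
  have hd2 : ∀ x : ℝ, HasDerivAt (deriv ψ)
      (c * (r ^ 2 * Real.exp (r * x) - s ^ 2 * Real.exp (-(s * x)))) x := by
    intro x
    rw [hderiv1]
    have h1 : HasDerivAt (fun x : ℝ => Real.exp (r * x)) (Real.exp (r * x) * (r * 1)) x :=
      ((hasDerivAt_id x).const_mul r).exp
    have h2 : HasDerivAt (fun x : ℝ => Real.exp (-(s * x))) (Real.exp (-(s * x)) * (-(s * 1))) x :=
      (((hasDerivAt_id x).const_mul s).neg).exp
    have h3 := ((h1.const_mul r).add (h2.const_mul s)).const_mul c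
    exact h3.congr_deriv (by ring)
  -- factored form of the second derivative
  have hfac : ∀ x : ℝ, deriv (deriv ψ) x
      = c * Real.exp (-(s * x)) * (r ^ 2 * Real.exp ((r + s) * x) - s ^ 2) := by
    intro x
    rw [(hd2 x).deriv, show (r + s) * x = r * x + s * x by ring, Real.exp_add]
    have hne : Real.exp (-(s * x)) * Real.exp (s * x) = 1 := by
      rw [← Real.exp_add]; simp
    linear_combination (-(c * r ^ 2 * Real.exp (r * x))) * hne
  -- the inflection point
  obtain ⟨bhat, hb_def⟩ : ∃ b : ℝ, b = 2 * Real.log (s / r) / (r + s) := ⟨_, rfl⟩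
  have hlogpos : 0 < Real.log (s / r) := Real.log_pos ((one_lt_div hr).mpr hrs)
  have hrs0 : (0:ℝ) < r + s := by linarith
  have hbpos : 0 < bhat := by rw [hb_def]; positivity
  have hkey : (r + s) * bhat = Real.log ((s / r) ^ 2) := by
    rw [hb_def, Real.log_pow]
    push_cast
    field_simp
  have hexp_b : r ^ 2 * Real.exp ((r + s) * bhat) = s ^ 2 := by
    rw [hkey, Real.exp_log (by positivity), div_pow]
    field_simp
  refine ⟨bhat, hbpos, ?_, ?_, ?_, ?_, ?_⟩
  · rw [hfac, hexp_b]
    ring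
  · intro x _ hx
    rw [hfac]
    have h1 : Real.exp ((r + s) * x) < Real.exp ((r + s) * bhat) :=
      Real.exp_lt_exp.mpr (mul_lt_mul_of_pos_left hx hrs0)
    have h2 : r ^ 2 * Real.exp ((r + s) * x) < s ^ 2 := by
      calc r ^ 2 * Real.exp ((r + s) * x)
          < r ^ 2 * Real.exp ((r + s) * bhat) :=
            mul_lt_mul_of_pos_left h1 (by positivity)
        _ = s ^ 2 := hexp_b
    have h3 : 0 < c * Real.exp (-(s * x)) := by positivity
    exact mul_neg_of_pos_of_neg h3 (by linarith)
  · intro x hx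
    rw [hfac]
    have h1 : Real.exp ((r + s) * bhat) < Real.exp ((r + s) * x) :=
      Real.exp_lt_exp.mpr (mul_lt_mul_of_pos_left hx hrs0)
    have h2 : s ^ 2 < r ^ 2 * Real.exp ((r + s) * x) := by
      calc s ^ 2 = r ^ 2 * Real.exp ((r + s) * bhat) := hexp_b.symm
        _ < r ^ 2 * Real.exp ((r + s) * x) :=
            mul_lt_mul_of_pos_left h1 (by positivity)
    have h3 : 0 < c * Real.exp (-(s * x)) := by positivity
    exact mul_pos h3 (by linarith)
  · -- q ψ(b̂) = μ ψ'(b̂)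
    have h1 : s - r = 2 * μ / σ ^ 2 := by rw [hr_def, hs_def]; ring
    have h2 : r * s = 2 * q / σ ^ 2 := by
      rw [hr_def, hs_def]
      field_simp
      linear_combination hΔsq
    have hid : (q - μ * r) * s ^ 2 = (q + μ * s) * r ^ 2 := by
      linear_combination q * (s + r) * h1 - μ * (s + r) * h2
    have hEF : r ^ 2 * (Real.exp (r * bhat) * Real.exp (s * bhat)) = s ^ 2 := by
      rw [← Real.exp_add, show r * bhat + s * bhat = (r + s) * bhat by ring]
      exact hexp_b
    have hN : Real.exp (-(s * bhat)) * Real.exp (s * bhat) = 1 := by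
      rw [← Real.exp_add]; simp
    have hE2 : r ^ 2 * Real.exp (r * bhat) = s ^ 2 * Real.exp (-(s * bhat)) := by
      linear_combination Real.exp (-(s * bhat)) * hEF - r ^ 2 * Real.exp (r * bhat) * hN
    rw [hderiv1, hψf]
    simp only
    have hmul : r ^ 2 * (q * (c * (Real.exp (r * bhat) - Real.exp (-(s * bhat)))))
        = r ^ 2 * (μ * (c * (r * Real.exp (r * bhat) + s * Real.exp (-(s * bhat))))) := by
      linear_combination c * (q - μ * r) * hE2 + c * Real.exp (-(s * bhat)) * hid
    exact mul_left_cancel₀ (by positivity : (r:ℝ) ^ 2 ≠ 0) hmul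
  · intro b _ hb0
    rw [hfac] at hb0
    have h1 : r ^ 2 * Real.exp ((r + s) * b) - s ^ 2 = 0 := by
      have hcp : c * Real.exp (-(s * b)) ≠ 0 := by positivity
      exact (mul_eq_zero.mp hb0).resolve_left hcp
    have h2 : Real.exp ((r + s) * b) = Real.exp ((r + s) * bhat) := by
      have hr2 : (r:ℝ) ^ 2 ≠ 0 := by positivity
      have h4 : r ^ 2 * Real.exp ((r + s) * b) = r ^ 2 * Real.exp ((r + s) * bhat) := by
        rw [hexp_b]; linarith
      exact mul_left_cancel₀ hr2 h4
    have h3 : (r + s) * b = (r + s) * bhat := Real.exp_injective h2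
    exact mul_left_cancel₀ hrs0.ne' h3
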